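/- There exists a function f : ℕ → ℕ such that the following holds. Let G be a finite group admitting an automorphism α whose order is coprime to |G|, and suppose that |I_G(α)| ≤ m. Then the order of [G,α] is at most f(m). -/

import Mathlib

open Subgroup
open scoped IsMulCommutative commutatorElement

namespace CoprimeAutBound

variable {G : Type*} [Group G] [Finite G] (α : MulAut G)
set_option linter.unusedSectionVars false

/-- The set of twisted commutators `g⁻¹ · α(g)`. -/
def I (α : MulAut G) : Set G := {x : G | ∃ g : G, x = g⁻¹ * α g}

/-- The fixed-point subgroup of `α`. -/
def C (α : MulAut G) : Subgroup G where
  carrier := {g : G | α g = g}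
  one_mem' := by simp
  mul_mem' := by
    intro a b ha hb
    simp only [Set.mem_setOf_eq, map_mul] at *
    rw [ha, hb]
  inv_mem' := by
    intro a ha
    simp only [Set.mem_setOf_eq, map_inv] at *
    rw [ha]

lemma mem_C {g : G} : g ∈ C α ↔ α g = g := Iff.rfl

lemma index_C_le {m : ℕ} (hm : Nat.card (I α) ≤ m) : (C α).index ≤ m := by
  have e := (QuotientGroup.quotientRightRelEquivQuotientLeftRel (C α))
  -- injection from the right-coset quotient into I α
  let j : Quotient (QuotientGroup.rightRel (C α)) → I α :=
    Quotient.lift (fun g => ⟨g⁻¹ * α g, g, rfl⟩) (by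
      intro a b hab
      have hab' : b * a⁻¹ ∈ C α := (QuotientGroup.rightRel_apply).mp hab
      rw [mem_C] at hab'
      simp only [map_mul, map_inv] at hab'
      ext
      show a⁻¹ * α a = b⁻¹ * α b
      have : α b = b * a⁻¹ * α a := by
        rw [← hab']; group
      rw [this]; group)
  have hj : Function.Injective j := by
    intro x y
    induction x using Quotient.inductionOn with | h a =>
    induction y using Quotient.inductionOn with | h b =>
    intro hxy
    have hxy' : a⁻¹ * α a = b⁻¹ * α b := congrArg Subtype.val hxy
    have key : b * a⁻¹ ∈ C α := by
      rw [mem_C]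
      simp only [map_mul, map_inv]
      have : α b = b * (a⁻¹ * α a) * (α a)⁻¹ * α a := by rw [hxy']; group
      rw [this]; group
    exact Quotient.sound ((QuotientGroup.rightRel_apply).mpr key)
  calc (C α).index = Nat.card (G ⧸ C α) := rfl
    _ = Nat.card (Quotient (QuotientGroup.rightRel (C α))) := (Nat.card_congr e.symm)
    _ ≤ Nat.card (I α) := Nat.card_le_card_of_injective j hj
    _ ≤ m := hm

/-- The (normal) core of the fixed-point subgroup. -/
def N (α : MulAut G) : Subgroup G := (C α).normalCore

instance : (N α).Normal := Subgroup.normalCore_normal _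

lemma N_fix {n : G} (hn : n ∈ N α) : α n = n :=
  (mem_C α).mp (Subgroup.normalCore_le (C α) hn)

lemma index_N_le {m : ℕ} (hm : Nat.card (I α) ≤ m) : (N α).index ≤ Nat.factorial m := by
  have h1 : (N α).index ≤ Nat.factorial ((C α).index) := by
    rw [N, Subgroup.normalCore_eq_ker, Subgroup.index_ker]
    have h2 : Nat.card (MulAction.toPermHom G (G ⧸ C α)).range ≤
        Nat.card (Equiv.Perm (G ⧸ C α)) :=
      Nat.card_le_card_of_injective _ Subtype.val_injective
    have := Fintype.ofFinite (G ⧸ C α)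
    have : DecidableEq (G ⧸ C α) := Classical.decEq _
    have h3 : Nat.card (Equiv.Perm (G ⧸ C α)) = Nat.factorial ((C α).index) := by
      rw [Subgroup.index_eq_card, Nat.card_eq_fintype_card, Nat.card_eq_fintype_card,
        Fintype.card_perm]
    omega
  exact h1.trans (Nat.factorial_le (index_C_le α hm))

/-- The subgroup `[G, α]`. -/
def Hsub (α : MulAut G) : Subgroup G := Subgroup.closure (I α)

lemma I_comm_N {x : G} (hx : x ∈ I α) {n : G} (hn : n ∈ N α) : x * n = n * x := by
  obtain ⟨g, rfl⟩ := hx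
  have hn' : g * n * g⁻¹ ∈ N α := Subgroup.Normal.conj_mem inferInstance n hn g
  have h1 : α g * n * (α g)⁻¹ = g * n * g⁻¹ := by
    calc α g * n * (α g)⁻¹ = α (g * n * g⁻¹) := by
          rw [map_mul, map_mul, map_inv, N_fix α hn]
      _ = g * n * g⁻¹ := N_fix α hn'
  have h2 : α g * n = g * n * g⁻¹ * α g := by
    calc α g * n = (α g * n * (α g)⁻¹) * α g := by group
      _ = g * n * g⁻¹ * α g := by rw [h1]
  calc g⁻¹ * α g * n = g⁻¹ * (α g * n) := by group
    _ = g⁻¹ * (g * n * g⁻¹ * α g) := by rw [h2]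
    _ = n * (g⁻¹ * α g) := by group

lemma H_comm_N {h : G} (hh : h ∈ Hsub α) {n : G} (hn : n ∈ N α) : h * n = n * h := by
  induction hh using Subgroup.closure_induction with
  | mem x hx => exact I_comm_N α hx hn
  | one => simp
  | mul x y hx hy px py => calc x * y * n = x * (y * n) := by group
      _ = x * (n * y) := by rw [py]
      _ = (x * n) * y := by group
      _ = n * (x * y) := by rw [px]; group
  | inv x hx px =>
      calc x⁻¹ * n = x⁻¹ * n * x * x⁻¹ := by group
        _ = x⁻¹ * (n * x) * x⁻¹ := by group
        _ = x⁻¹ * (x * n) * x⁻¹ := by rw [px]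
        _ = n * x⁻¹ := by group

instance H_normal : (Hsub α).Normal := by
  constructor
  intro x hx g
  induction hx using Subgroup.closure_induction with
  | mem y hy =>
      obtain ⟨h, rfl⟩ := hy
      have hA : (h * g⁻¹)⁻¹ * α (h * g⁻¹) ∈ Hsub α := Subgroup.subset_closure ⟨h * g⁻¹, rfl⟩
      have hB : ((g⁻¹)⁻¹ * α g⁻¹)⁻¹ ∈ Hsub α :=
        Subgroup.inv_mem _ (Subgroup.subset_closure ⟨g⁻¹, rfl⟩)
      have key : g * (h⁻¹ * α h) * g⁻¹ =
          ((h * g⁻¹)⁻¹ * α (h * g⁻¹)) * ((g⁻¹)⁻¹ * α g⁻¹)⁻¹ := by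
        simp only [map_mul, map_inv]
        group
      rw [key]
      exact Subgroup.mul_mem _ hA hB
  | one => simpa using Subgroup.one_mem (Hsub α)
  | mul x y hx hy px py =>
      have : g * (x * y) * g⁻¹ = (g * x * g⁻¹) * (g * y * g⁻¹) := by group
      rw [this]; exact Subgroup.mul_mem _ px py
  | inv x hx px =>
      have : g * x⁻¹ * g⁻¹ = (g * x * g⁻¹)⁻¹ := by group
      rw [this]; exact Subgroup.inv_mem _ px

lemma image_I : (α : G →* G) '' (I α) = I α := by
  ext x
  constructor
  · rintro ⟨y, ⟨g, rfl⟩, rfl⟩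
    exact ⟨α g, by simp [map_mul, map_inv]⟩
  · rintro ⟨g, rfl⟩
    refine ⟨(α.symm g)⁻¹ * α (α.symm g), ⟨α.symm g, rfl⟩, ?_⟩
    simp only [map_mul, map_inv, MonoidHom.coe_coe, MulEquiv.apply_symm_apply]

lemma map_H : (Hsub α).map (α : G →* G) = Hsub α := by
  rw [Hsub, MonoidHom.map_closure, image_I]

/-- The commutator subgroup `[H, H]` of `H = [G,α]`, as a subgroup of `G`. -/
def K (α : MulAut G) : Subgroup G := ⁅Hsub α, Hsub α⁆

instance : (K α).Normal := Subgroup.commutator_normal _ _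

lemma K_le_H : K α ≤ Hsub α := Subgroup.commutator_le_left _ _

lemma map_K : (K α).map (α : G →* G) = K α := by
  rw [K, Subgroup.map_commutator, map_H]

/-- The automorphism of `G ⧸ K α` induced by `α`. -/
def abar (α : MulAut G) : MulAut (G ⧸ K α) :=
  QuotientGroup.congr (K α) (K α) (α : G ≃* G) (map_K α)

lemma abar_mk (g : G) : abar α (QuotientGroup.mk g) = QuotientGroup.mk (α g) :=
  QuotientGroup.congr_mk _ _ _ _ g

lemma abar_pow_mk (i : ℕ) : ∀ g : G,
    (abar α ^ i) (QuotientGroup.mk g) = QuotientGroup.mk ((α ^ i) g) := by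
  induction i with
  | zero => intro g; simp
  | succ k ih =>
      intro g
      rw [pow_succ, MulAut.mul_apply, abar_mk, ih (α g), ← MulAut.mul_apply, ← pow_succ]

/-- The image of `H = [G,α]` in `G ⧸ K α`. -/
def Hbar (α : MulAut G) : Subgroup (G ⧸ K α) := (Hsub α).map (QuotientGroup.mk' (K α))

lemma Hbar_comm {a b : G ⧸ K α} (ha : a ∈ Hbar α) (hb : b ∈ Hbar α) : a * b = b * a := by
  obtain ⟨x, hx, rfl⟩ := ha
  obtain ⟨y, hy, rfl⟩ := hb
  show QuotientGroup.mk x * QuotientGroup.mk y = QuotientGroup.mk y * QuotientGroup.mk x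
  rw [← QuotientGroup.mk_mul, ← QuotientGroup.mk_mul, QuotientGroup.eq]
  have h : (x * y)⁻¹ * (y * x) = ⁅y⁻¹, x⁻¹⁆ := by
    rw [commutatorElement_def]; group
  rw [h]
  exact Subgroup.commutator_mem_commutator (Subgroup.inv_mem _ hy) (Subgroup.inv_mem _ hx)

instance : IsMulCommutative (Hbar α) :=
  ⟨⟨fun a b => Subtype.ext (Hbar_comm α a.2 b.2)⟩⟩

lemma mk_I_mem_Hbar {x : G} (hx : x ∈ I α) : (QuotientGroup.mk x : G ⧸ K α) ∈ Hbar α :=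
  ⟨x, Subgroup.subset_closure hx, rfl⟩

lemma abar_mem_Hbar {x : G ⧸ K α} (hx : x ∈ Hbar α) : abar α x ∈ Hbar α := by
  obtain ⟨h, hh, rfl⟩ := hx
  have hαh : α h ∈ Hsub α := by
    rw [← map_H α]; exact ⟨h, hh, rfl⟩
  exact ⟨α h, hαh, (abar_mk α h).symm⟩

lemma abar_pow_mem_Hbar (i : ℕ) {x : G ⧸ K α} (hx : x ∈ Hbar α) : (abar α ^ i) x ∈ Hbar α := by
  induction i with
  | zero => simpa using hx
  | succ k ih => rw [pow_succ', MulAut.mul_apply]; exact abar_mem_Hbar α ih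

/-- `x ↦ ᾱ^i(x)` as a homomorphism of `H̄`. -/
def beta (α : MulAut G) (i : ℕ) : ↥(Hbar α) →* ↥(Hbar α) where
  toFun x := ⟨(abar α ^ i) ↑x, abar_pow_mem_Hbar α i x.2⟩
  map_one' := Subtype.ext (by simp)
  map_mul' x y := Subtype.ext (by
    show (abar α ^ i) (↑(x * y)) = _
    rw [Subgroup.coe_mul, map_mul]
    rfl)

/-- The "norm" homomorphism `T = ∏_{i < n} ᾱ^i` on the abelian group `H̄`. -/
noncomputable def T (α : MulAut G) : ↥(Hbar α) →* ↥(Hbar α) :=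
  ∏ i ∈ Finset.range (orderOf α), beta α i

lemma coe_prod_beta (g : G) (x : ↥(Hbar α))
    (hx : (x : G ⧸ K α) = QuotientGroup.mk (g⁻¹ * α g)) (k : ℕ) :
    ((∏ i ∈ Finset.range k, beta α i x : ↥(Hbar α)) : G ⧸ K α) =
      (QuotientGroup.mk g)⁻¹ * (abar α ^ k) (QuotientGroup.mk g) := by
  induction k with
  | zero => simp
  | succ k ih =>
      rw [Finset.prod_range_succ, Subgroup.coe_mul, ih]
      have h1 : ((beta α k x : ↥(Hbar α)) : G ⧸ K α) = (abar α ^ k) ↑x := rfl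
      have h2 : ((x : G ⧸ K α)) = (QuotientGroup.mk g)⁻¹ * abar α (QuotientGroup.mk g) := by
        rw [hx, abar_mk]
        rfl
      have h3 : ((beta α k x : ↥(Hbar α)) : G ⧸ K α)
          = ((abar α ^ k) (QuotientGroup.mk g))⁻¹ * (abar α ^ (k + 1)) (QuotientGroup.mk g) := by
        rw [h1, h2, map_mul, map_inv, pow_succ, MulAut.mul_apply]
      rw [h3]
      group

lemma T_eq_one_on_I {g : G}
    (hmem : (QuotientGroup.mk (g⁻¹ * α g) : G ⧸ K α) ∈ Hbar α) :
    T α ⟨QuotientGroup.mk (g⁻¹ * α g), hmem⟩ = 1 := by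
  have h := coe_prod_beta α g ⟨QuotientGroup.mk (g⁻¹ * α g), hmem⟩ rfl (orderOf α)
  have h2 : (abar α ^ orderOf α) (QuotientGroup.mk g) = QuotientGroup.mk g := by
    rw [abar_pow_mk, pow_orderOf_eq_one α]
    rfl
  apply Subtype.ext
  show ((T α ⟨QuotientGroup.mk (g⁻¹ * α g), hmem⟩ : ↥(Hbar α)) : G ⧸ K α) = 1
  have hT : T α ⟨QuotientGroup.mk (g⁻¹ * α g), hmem⟩
      = ∏ i ∈ Finset.range (orderOf α), beta α i ⟨QuotientGroup.mk (g⁻¹ * α g), hmem⟩ := by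
    rw [T, MonoidHom.finset_prod_apply]
  rw [hT, h, h2]
  group

lemma T_eq_one (x : ↥(Hbar α)) : T α x = 1 := by
  have hHbar : Hbar α ≤
      Subgroup.map (Hbar α).subtype (T α).ker := by
    have heq : Hbar α = Subgroup.closure ((QuotientGroup.mk' (K α)) '' (I α)) := by
      rw [Hbar, Hsub, MonoidHom.map_closure]
    nth_rewrite 1 [heq]
    apply (Subgroup.closure_le _).mpr
    rintro y ⟨x0, ⟨g, rfl⟩, rfl⟩
    exact ⟨⟨QuotientGroup.mk (g⁻¹ * α g), mk_I_mem_Hbar α ⟨g, rfl⟩⟩,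
      T_eq_one_on_I α _, rfl⟩
  obtain ⟨w, hw, hwx⟩ := hHbar x.2
  have : w = x := Subtype.ext hwx
  rw [← this]
  exact hw

lemma fixed_eq_one (hcop : Nat.Coprime (orderOf α) (Nat.card G)) (x : ↥(Hbar α))
    (hx : abar α ↑x = ↑x) : x = 1 := by
  have hpowfix : ∀ i : ℕ, (abar α ^ i) (↑x : G ⧸ K α) = ↑x := by
    intro i
    induction i with
    | zero => simp
    | succ k ih => rw [pow_succ, MulAut.mul_apply, hx, ih]
  have hTx : T α x = x ^ (orderOf α) := by
    rw [T, MonoidHom.finset_prod_apply]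
    have hconst : ∀ i ∈ Finset.range (orderOf α), beta α i x = x := by
      intro i _
      exact Subtype.ext (hpowfix i)
    rw [Finset.prod_congr rfl hconst, Finset.prod_const, Finset.card_range]
  have h1 : x ^ orderOf α = 1 := by rw [← hTx, T_eq_one]
  have h2 : orderOf x ∣ orderOf α := orderOf_dvd_of_pow_eq_one h1
  have h3 : orderOf x ∣ Nat.card G := by
    calc orderOf x ∣ Nat.card ↥(Hbar α) := orderOf_dvd_natCard x
      _ ∣ Nat.card (G ⧸ K α) := Subgroup.card_subgroup_dvd_card (Hbar α)
      _ ∣ Nat.card G := Subgroup.card_quotient_dvd_card (K α)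
  have h4 : orderOf x ∣ 1 := by
    rw [← hcop]
    exact Nat.dvd_gcd h2 h3
  rw [← orderOf_eq_one_iff]
  exact Nat.dvd_one.mp h4

lemma card_Hbar_le (hcop : Nat.Coprime (orderOf α) (Nat.card G)) {m : ℕ}
    (hm : Nat.card (I α) ≤ m) : Nat.card ↥(Hbar α) ≤ m := by
  have hmemψ : ∀ x : ↥(Hbar α),
      (↑x : G ⧸ K α)⁻¹ * abar α ↑x ∈ (QuotientGroup.mk' (K α)) '' (I α) := by
    intro x
    obtain ⟨h, hh, hx⟩ := x.2
    refine ⟨h⁻¹ * α h, ⟨h, rfl⟩, ?_⟩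
    show (QuotientGroup.mk (h⁻¹ * α h) : G ⧸ K α) = _
    have : (↑x : G ⧸ K α) = QuotientGroup.mk h := hx.symm
    rw [this, abar_mk]
    rfl
  let ψ : ↥(Hbar α) → ((QuotientGroup.mk' (K α)) '' (I α) : Set (G ⧸ K α)) :=
    fun x => ⟨(↑x : G ⧸ K α)⁻¹ * abar α ↑x, hmemψ x⟩
  have hψ : Function.Injective ψ := by
    intro x y hxy
    have he : (↑x : G ⧸ K α)⁻¹ * abar α ↑x = (↑y : G ⧸ K α)⁻¹ * abar α ↑y :=
      congrArg Subtype.val hxy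
    have hfix : abar α ↑(y * x⁻¹) = (↑(y * x⁻¹) : G ⧸ K α) := by
      have hcoe : (↑(y * x⁻¹) : G ⧸ K α) = ↑y * (↑x)⁻¹ := rfl
      rw [hcoe, map_mul, map_inv]
      have : abar α ↑y = ↑y * (↑x : G ⧸ K α)⁻¹ * abar α ↑x := by
        rw [mul_assoc, he]; group
      rw [this]; group
    have : y * x⁻¹ = 1 := fixed_eq_one α hcop _ hfix
    have := mul_inv_eq_one.mp this
    exact this.symm
  calc Nat.card ↥(Hbar α) ≤ Nat.card ((QuotientGroup.mk' (K α)) '' (I α) : Set (G ⧸ K α)) :=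
        Nat.card_le_card_of_injective ψ hψ
    _ ≤ Nat.card (I α) := Nat.card_image_le (Set.toFinite _)
    _ ≤ m := hm

lemma center_index_le {m : ℕ} (hm : Nat.card (I α) ≤ m) :
    (Subgroup.center ↥(Hsub α)).index ≤ Nat.factorial m := by
  have hle : (N α).subgroupOf (Hsub α) ≤ Subgroup.center ↥(Hsub α) := by
    intro z hz
    rw [Subgroup.mem_center_iff]
    intro b
    exact Subtype.ext (H_comm_N α b.2 (Subgroup.mem_subgroupOf.mp hz))
  have h1 : (Subgroup.center ↥(Hsub α)).index ≤ ((N α).subgroupOf (Hsub α)).index :=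
    Nat.le_of_dvd (Nat.pos_of_ne_zero Subgroup.index_ne_zero_of_finite)
      (Subgroup.index_dvd_of_le hle)
  have h3 : (N α).relIndex (Hsub α) ≤ (N α).index :=
    Nat.le_of_dvd (Nat.pos_of_ne_zero Subgroup.index_ne_zero_of_finite)
      (Subgroup.relIndex_dvd_index_of_normal _ _)
  have h4 := index_N_le α hm
  have h2 : ((N α).subgroupOf (Hsub α)).index = (N α).relIndex (Hsub α) := rfl
  omega

lemma commutator_center_aux {H : Type*} [Group H] {z w : H}
    (hz : ∀ g, g * z = z * g) (hw : ∀ g, g * w = w * g) (x y : H) :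
    ⁅x * z, y * w⁆ = ⁅x, y⁆ := by
  calc ⁅x * z, y * w⁆ = x * (z * (y * w)) * z⁻¹ * x⁻¹ * w⁻¹ * y⁻¹ := by
        rw [commutatorElement_def]; group
    _ = x * ((y * w) * z) * z⁻¹ * x⁻¹ * w⁻¹ * y⁻¹ := by rw [hz (y * w)]
    _ = x * y * (w * x⁻¹) * w⁻¹ * y⁻¹ := by group
    _ = x * y * (x⁻¹ * w) * w⁻¹ * y⁻¹ := by rw [hw x⁻¹]
    _ = ⁅x, y⁆ := by rw [commutatorElement_def]; group

lemma card_commutatorSet_le {m : ℕ} (hm : Nat.card (I α) ≤ m) :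
    Nat.card (commutatorSet ↥(Hsub α)) ≤ Nat.factorial m * Nat.factorial m := by
  set Z := Subgroup.center ↥(Hsub α) with hZ
  -- the commutator map descends to the central quotient
  let F : (↥(Hsub α) ⧸ Z) → (↥(Hsub α) ⧸ Z) → ↥(Hsub α) :=
    Quotient.lift₂ (fun x y => ⁅x, y⁆) (by
      intro x y x' y' hx hy
      have hx' : x⁻¹ * x' ∈ Z := QuotientGroup.leftRel_apply.mp hx
      have hy' : y⁻¹ * y' ∈ Z := QuotientGroup.leftRel_apply.mp hy
      have ex : x' = x * (x⁻¹ * x') := by group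
      have ey : y' = y * (y⁻¹ * y') := by group
      rw [ex, ey]
      exact (commutator_center_aux
        (fun g => Subgroup.mem_center_iff.mp hx' g)
        (fun g => Subgroup.mem_center_iff.mp hy' g) x y).symm)
  have hFmk : ∀ x y : ↥(Hsub α),
      F (QuotientGroup.mk x) (QuotientGroup.mk y) = ⁅x, y⁆ := fun x y => rfl
  have hFmem : ∀ p : (↥(Hsub α) ⧸ Z) × (↥(Hsub α) ⧸ Z),
      F p.1 p.2 ∈ commutatorSet ↥(Hsub α) := by
    rintro ⟨a, b⟩
    induction a using Quotient.inductionOn with | h x =>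
    induction b using Quotient.inductionOn with | h y =>
    exact ⟨x, y, (hFmk x y).symm⟩
  have hsurj : Function.Surjective
      (fun p : (↥(Hsub α) ⧸ Z) × (↥(Hsub α) ⧸ Z) =>
        (⟨F p.1 p.2, hFmem p⟩ : commutatorSet ↥(Hsub α))) := by
    rintro ⟨c, g1, g2, rfl⟩
    exact ⟨(QuotientGroup.mk g1, QuotientGroup.mk g2), Subtype.ext (hFmk g1 g2)⟩
  calc Nat.card (commutatorSet ↥(Hsub α))
      ≤ Nat.card ((↥(Hsub α) ⧸ Z) × (↥(Hsub α) ⧸ Z)) :=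
        Nat.card_le_card_of_surjective _ hsurj
    _ = Z.index * Z.index := by
        rw [Nat.card_prod, Subgroup.index_eq_card]
    _ ≤ Nat.factorial m * Nat.factorial m :=
        Nat.mul_le_mul (center_index_le α hm) (center_index_le α hm)

lemma cardCommutatorBound_mono {a b : ℕ} (h : a ≤ b) :
    Subgroup.cardCommutatorBound a ≤ Subgroup.cardCommutatorBound b := by
  rcases Nat.eq_zero_or_pos a with rfl | ha
  · have h0 : Subgroup.cardCommutatorBound 0 = 1 := by
      simp [Subgroup.cardCommutatorBound]
    rw [h0]
    rcases Nat.eq_zero_or_pos b with rfl | hb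
    · simp [Subgroup.cardCommutatorBound]
    · exact Nat.one_le_pow _ _ (Nat.pow_pos hb)
  · unfold Subgroup.cardCommutatorBound
    have h1 : a ^ (2 * a) ≤ b ^ (2 * b) :=
      le_trans (Nat.pow_le_pow_left h _) (Nat.pow_le_pow_right (le_trans ha h) (by omega))
    have h2 : a ^ (2 * a + 1) ≤ b ^ (2 * b + 1) :=
      le_trans (Nat.pow_le_pow_left h _) (Nat.pow_le_pow_right (le_trans ha h) (by omega))
    calc (a ^ (2 * a)) ^ (a ^ (2 * a + 1) + 1)
        ≤ (a ^ (2 * a)) ^ (b ^ (2 * b + 1) + 1) :=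
          Nat.pow_le_pow_right (Nat.pow_pos ha) (by omega)
      _ ≤ (b ^ (2 * b)) ^ (b ^ (2 * b + 1) + 1) := Nat.pow_le_pow_left h1 _

lemma card_K_le {m : ℕ} (hm : Nat.card (I α) ≤ m) :
    Nat.card ↥(K α) ≤ Subgroup.cardCommutatorBound (Nat.factorial m * Nat.factorial m) := by
  have hmap : Subgroup.map (Hsub α).subtype (_root_.commutator ↥(Hsub α)) = K α := by
    rw [_root_.commutator, Subgroup.map_commutator]
    rw [← MonoidHom.range_eq_map, Subgroup.range_subtype]
    rfl
  have hcard : Nat.card ↥(K α) = Nat.card (_root_.commutator ↥(Hsub α)) := by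
    rw [← hmap]
    exact (Nat.card_congr (Subgroup.equivMapOfInjective _ _
      (Subgroup.subtype_injective _)).toEquiv).symm
  rw [hcard]
  calc Nat.card (_root_.commutator ↥(Hsub α))
      ≤ Subgroup.cardCommutatorBound (Nat.card (commutatorSet ↥(Hsub α))) :=
        Subgroup.card_commutator_le_of_finite_commutatorSet ↥(Hsub α)
    _ ≤ Subgroup.cardCommutatorBound (Nat.factorial m * Nat.factorial m) :=
        cardCommutatorBound_mono (card_commutatorSet_le α hm)

lemma card_H_le (hcop : Nat.Coprime (orderOf α) (Nat.card G)) {m : ℕ}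
    (hm : Nat.card (I α) ≤ m) :
    Nat.card ↥(Hsub α) ≤
      m * Subgroup.cardCommutatorBound (Nat.factorial m * Nat.factorial m) := by
  let φ : ↥(Hsub α) →* G ⧸ K α := (QuotientGroup.mk' (K α)).comp (Hsub α).subtype
  have hrange : φ.range = Hbar α := by
    rw [MonoidHom.range_comp, Subgroup.range_subtype]
    rfl
  have hcard : Nat.card ↥(Hsub α) = Nat.card (↥(Hsub α) ⧸ φ.ker) * Nat.card ↥(φ.ker) :=
    Subgroup.card_eq_card_quotient_mul_card_subgroup φ.ker
  have h1 : Nat.card (↥(Hsub α) ⧸ φ.ker) = Nat.card ↥(Hbar α) := by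
    rw [← hrange]
    exact Nat.card_congr (QuotientGroup.quotientKerEquivRange φ).toEquiv
  have h2 : Nat.card ↥(φ.ker) ≤ Nat.card ↥(K α) := by
    have hker : ∀ x : ↥(φ.ker), ((x : ↥(Hsub α)) : G) ∈ K α := by
      intro x
      have hx : φ ↑x = 1 := x.2
      exact (QuotientGroup.eq_one_iff _).mp hx
    refine Nat.card_le_card_of_injective
      (fun x => (⟨((x : ↥(Hsub α)) : G), hker x⟩ : ↥(K α))) ?_
    intro x y hxy
    have : ((x : ↥(Hsub α)) : G) = ((y : ↥(Hsub α)) : G) :=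
      congrArg (fun t : ↥(K α) => (t : G)) hxy
    exact Subtype.ext (Subtype.ext this)
  rw [hcard, h1]
  exact Nat.mul_le_mul (card_Hbar_le α hcop hm) (h2.trans (card_K_le α hm))

end CoprimeAutBound

/-- If a finite group `G` admits a coprime automorphism `α` with `|I_G(α)| ≤ m`,
then the order of `[G,α]` is `m`-bounded. -/
theorem order_of_commutator_subgroup_bounded :
    ∃ f : ℕ → ℕ,
      ∀ (G : Type*) [Group G] [Finite G] (α : MulAut G) (m : ℕ),
        Nat.Coprime (orderOf α) (Nat.card G) →
        Nat.card {x : G | ∃ g : G, x = g⁻¹ * α g} ≤ m →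
        Nat.card (Subgroup.closure {x : G | ∃ g : G, x = g⁻¹ * α g}) ≤ f m := by
  refine ⟨fun m => m * Subgroup.cardCommutatorBound (Nat.factorial m * Nat.factorial m),
    fun G _ _ α m hcop hm => ?_⟩
  exact CoprimeAutBound.card_H_le α hcop hm
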